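/- With the notation of the quadratically-perturbed Lasso objective: if b̂ minimizes L0(b) = (1/2)‖Xb − y‖² + g(b) (g convex) and b^μ minimizes L_μ(b) = L0(b) + (μn/2)‖Σ^{1/2}(b − b*)‖², then ‖X(b̂ − b^μ)‖² ≤ μn‖Σ^{1/2}(b̂ − b*)‖². -/

import Mathlib

open Matrix BigOperators

noncomputable def vnorm {m : ℕ} (v : Fin m → ℝ) : ℝ := Real.sqrt (∑ i, v i ^ 2)

noncomputable def quadForm {p : ℕ} (Sig : Matrix (Fin p) (Fin p) ℝ) (v : Fin p → ℝ) : ℝ :=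
  v ⬝ᵥ Sig.mulVec v

lemma vnorm_sq {m : ℕ} (v : Fin m → ℝ) : (vnorm v)^2 = ∑ i, v i ^ 2 :=
  Real.sq_sqrt (Finset.sum_nonneg fun i _ => sq_nonneg _)

lemma quad_comb {p : ℕ} (Sig : Matrix (Fin p) (Fin p) ℝ) (t : ℝ) (a b : Fin p → ℝ) :
    quadForm Sig ((1-t) • a + t • b) =
      (1-t) * quadForm Sig a + t * quadForm Sig b - t*(1-t) * quadForm Sig (b - a) := by
  simp only [quadForm, Matrix.mulVec_smul, Matrix.mulVec_add, Matrix.mulVec_sub,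
    dotProduct_smul, smul_dotProduct, dotProduct_add,
    add_dotProduct, dotProduct_sub, sub_dotProduct, smul_eq_mul]
  ring

lemma sum_sq_comb {n : ℕ} (t : ℝ) (u v : Fin n → ℝ) :
    ∑ i, ((1-t) * u i + t * v i)^2
      = (1-t) * ∑ i, u i^2 + t * ∑ i, v i^2 - t*(1-t) * ∑ i, (v i - u i)^2 := by
  have h : ∀ i ∈ Finset.univ, ((1-t) * u i + t * v i)^2
      = (1-t) * u i^2 + t * v i^2 - t*(1-t) * (v i - u i)^2 := fun i _ => by ring
  rw [Finset.sum_congr rfl h, Finset.sum_sub_distrib, Finset.sum_add_distrib,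
    ← Finset.mul_sum, ← Finset.mul_sum, ← Finset.mul_sum]

/-- `‖X(b̂ − b^μ)‖² ≤ μn‖Σ^{1/2}(b̂ − b*)‖²`. -/
theorem stmt_1 {n p : ℕ} (X : Matrix (Fin n) (Fin p) ℝ) (y : Fin n → ℝ)
    (bstar : Fin p → ℝ) (g : (Fin p → ℝ) → ℝ) (hg : ConvexOn ℝ Set.univ g)
    (Sig : Matrix (Fin p) (Fin p) ℝ) (hSym : Sig.IsSymm)
    (hPSD : ∀ v : Fin p → ℝ, 0 ≤ quadForm Sig v)
    (μ : ℝ) (hμ : 0 < μ)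
    (L0 Lμ : (Fin p → ℝ) → ℝ)
    (hL0 : ∀ b, L0 b = (1/2) * (vnorm (X.mulVec b - y))^2 + g b)
    (hLμ : ∀ b, Lμ b = L0 b + (μ * n / 2) * quadForm Sig (b - bstar))
    (bhat bμ : Fin p → ℝ)
    (hbhat : ∀ b, L0 bhat ≤ L0 b)
    (hbμ : ∀ b, Lμ bμ ≤ Lμ b) :
    (vnorm (X.mulVec (bhat - bμ)))^2 ≤ μ * n * quadForm Sig (bhat - bstar) := by
  have hc : (0 : ℝ) ≤ μ * n := by positivity
  set D : ℝ := ∑ i, (X.mulVec (bhat - bμ)) i ^ 2 with hD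
  set Qh : ℝ := quadForm Sig (bhat - bstar) with hQh
  set Qm : ℝ := quadForm Sig (bμ - bstar) with hQm
  set Qd : ℝ := quadForm Sig (bhat - bμ) with hQd
  set A : ℝ := ∑ i, (X.mulVec bhat - y) i ^ 2 with hA
  set Bv : ℝ := ∑ i, (X.mulVec bμ - y) i ^ 2 with hBv
  have hDnn : 0 ≤ D := Finset.sum_nonneg fun i _ => sq_nonneg _
  have hQhnn : 0 ≤ μ * n * Qh := mul_nonneg hc (hPSD _)
  have hQmnn : 0 ≤ μ * n * Qm := mul_nonneg hc (hPSD _)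
  have hQdnn : 0 ≤ μ * n * Qd := mul_nonneg hc (hPSD _)
  -- the key inequality for every t ∈ (0,1]
  have key : ∀ t : ℝ, 0 < t → t ≤ 1 → (1 - t) * D ≤ μ * n * Qh := by
    intro t ht0 ht1
    have hmt := hbμ ((1-t) • bμ + t • bhat)
    rw [hLμ, hLμ, hL0, hL0, vnorm_sq, vnorm_sq] at hmt
    -- sum identity
    have e1 : ∀ i, (X.mulVec ((1-t) • bμ + t • bhat) - y) i
        = (1-t) * (X.mulVec bμ - y) i + t * (X.mulVec bhat - y) i := by
      intro i
      simp [Matrix.mulVec_add, Matrix.mulVec_smul]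
      ring
    have e2 : ∀ i, (X.mulVec bhat - y) i - (X.mulVec bμ - y) i = (X.mulVec (bhat - bμ)) i := by
      intro i
      simp [Matrix.mulVec_sub]
    have eS : ∑ i, (X.mulVec ((1-t) • bμ + t • bhat) - y) i ^ 2
        = (1-t) * Bv + t * A - t*(1-t) * D := by
      simp only [e1]
      rw [sum_sq_comb t (X.mulVec bμ - y) (X.mulVec bhat - y)]
      simp only [e2, hA, hBv, hD]
    -- quadForm identity
    have e3 : ((1-t) • bμ + t • bhat) - bstar = (1-t) • (bμ - bstar) + t • (bhat - bstar) := by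
      funext i
      simp
      ring
    have e4 : (bhat - bstar) - (bμ - bstar) = bhat - bμ := by
      funext i
      simp
    have eQ : quadForm Sig (((1-t) • bμ + t • bhat) - bstar)
        = (1-t) * Qm + t * Qh - t*(1-t) * Qd := by
      rw [e3, quad_comb, e4]
    rw [eS, eQ] at hmt
    -- convexity of g
    have hgm : g ((1-t) • bμ + t • bhat) ≤ (1-t) * g bμ + t * g bhat :=
      hg.2 (Set.mem_univ _) (Set.mem_univ _) (by linarith) (le_of_lt ht0) (by ring)
    -- optimality of bhat for L0
    have h2 := hbhat bμ
    rw [hL0, hL0, vnorm_sq, vnorm_sq] at h2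
    -- divide by t
    have step1 : t * ((1/2) * Bv + g bμ + (μ * n / 2) * Qm)
        ≤ t * ((1/2) * A + g bhat + (μ * n / 2) * Qh - ((1-t)/2) * (D + μ * n * Qd)) := by
      nlinarith [hmt, hgm]
    have step2 := (mul_le_mul_iff_right₀ ht0).mp step1
    have hQdt : 0 ≤ (1-t) * (μ * n * Qd) := mul_nonneg (by linarith) hQdnn
    nlinarith [step2, h2, hQmnn, hQdt]
  by_contra hcon
  push_neg at hcon
  rw [vnorm_sq] at hcon
  -- so μn Qh < D, hence D > 0
  have hD0 : 0 < D := lt_of_le_of_lt hQhnn hcon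
  set t : ℝ := (D - μ * n * Qh) / (2 * D) with htdef
  have ht0 : 0 < t := div_pos (by linarith) (by linarith)
  have ht1 : t ≤ 1 := by
    rw [div_le_one (by linarith)]
    linarith
  have hk := key t ht0 ht1
  have heq : (1 - t) * D = (D + μ * n * Qh) / 2 := by
    rw [htdef]
    field_simp
    ring
  rw [← hD] at hcon
  linarith [hk, heq, hcon]
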